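/- (Non-strict projection lemma) Let Q ∈ ℍ^p be Hermitian, U ∈ ℂ^{m×p}, V ∈ ℂ^{n×p}. There exists X ∈ ℂ^{m×n} such that Q + Uᴴ X V + Vᴴ Xᴴ U ⪰ 0 if and only if (i) Uₚᴴ Q Uₚ ⪰ 0 and Vₚᴴ Q Vₚ ⪰ 0, where Uₚ, Vₚ are matrices whose columns span ker U and ker V, and (ii) every ξ ∈ ker U ∩ ker V with ξᴴ Q ξ = 0 lies in ker Q. -/

import Mathlib

open Matrix
open scoped ComplexOrder


private lemma mulVec_ext' {a b : ℕ} {M N : Matrix (Fin a) (Fin b) ℂ}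
    (h : ∀ x, M *ᵥ x = N *ᵥ x) : M = N := by
  have : Matrix.toLin' M = Matrix.toLin' N := by
    apply LinearMap.ext; intro x; simpa [Matrix.toLin'_apply] using h x
  exact Matrix.toLin'.injective this

private lemma star_mulVec_dot {a b : ℕ} (A : Matrix (Fin a) (Fin b) ℂ) (x : Fin b → ℂ)
    (w : Fin a → ℂ) : star (A *ᵥ x) ⬝ᵥ w = star x ⬝ᵥ (Aᴴ *ᵥ w) := by
  rw [star_mulVec, dotProduct_mulVec]

private lemma herm_dot_conj {q : ℕ} {H : Matrix (Fin q) (Fin q) ℂ} (hH : Hᴴ = H)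
    (u v : Fin q → ℂ) :
    star (star u ⬝ᵥ (H *ᵥ v)) = star v ⬝ᵥ (H *ᵥ u) := by
  rw [← star_dotProduct, star_mulVec_dot, hH]

private lemma factor_left {a b c : ℕ} (M : Matrix (Fin a) (Fin c) ℂ) (L : Matrix (Fin b) (Fin c) ℂ)
    (h : ∀ x, M *ᵥ x = 0 → L *ᵥ x = 0) :
    ∃ C : Matrix (Fin b) (Fin a) ℂ, L = C * M := by
  set f := M.mulVecLin with hf
  set g := L.mulVecLin with hg
  have hker : LinearMap.ker f ≤ LinearMap.ker g := by
    intro x hx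
    simp only [LinearMap.mem_ker, Matrix.mulVecLin_apply, hf, hg] at *
    exact h x hx
  have hsurj : Function.Surjective f.rangeRestrict := f.surjective_rangeRestrict
  obtain ⟨r, hr⟩ := f.rangeRestrict.exists_rightInverse_of_surjective
    (LinearMap.range_eq_top.2 hsurj)
  obtain ⟨K, hK⟩ := Submodule.exists_isCompl (LinearMap.range f)
  set π := (LinearMap.range f).linearProjOfIsCompl K hK
  set h0 : (Fin a → ℂ) →ₗ[ℂ] (Fin b → ℂ) := g ∘ₗ (r ∘ₗ π)
  refine ⟨LinearMap.toMatrix' h0, ?_⟩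
  apply mulVec_ext'
  intro x
  have h1 : (LinearMap.toMatrix' h0 * M) *ᵥ x = (LinearMap.toMatrix' h0) *ᵥ (M *ᵥ x) :=
    (Matrix.mulVec_mulVec x _ M).symm
  rw [h1]
  have h2 : (LinearMap.toMatrix' h0) *ᵥ (M *ᵥ x) = h0 (M *ᵥ x) := by
    rw [← Matrix.toLin'_apply, Matrix.toLin'_toMatrix']
  rw [h2]
  symm
  have hfx : M *ᵥ x = f x := rfl
  have hπ : π (f x) = ⟨f x, LinearMap.mem_range_self f x⟩ :=
    Submodule.linearProjOfIsCompl_apply_left hK ⟨f x, LinearMap.mem_range_self f x⟩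
  have hrx : f (r ⟨f x, LinearMap.mem_range_self f x⟩) = f x := by
    have := LinearMap.congr_fun hr ⟨f x, LinearMap.mem_range_self f x⟩
    simpa [LinearMap.rangeRestrict] using congrArg Subtype.val this
  have hkerx : r ⟨f x, LinearMap.mem_range_self f x⟩ - x ∈ LinearMap.ker f := by
    simp [LinearMap.mem_ker, map_sub, hrx]
  have hgx := hker hkerx
  simp only [LinearMap.mem_ker, map_sub, sub_eq_zero] at hgx
  calc h0 (M *ᵥ x) = g (r (π (f x))) := rfl
    _ = g (r ⟨f x, LinearMap.mem_range_self f x⟩) := by rw [hπ]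
    _ = g x := hgx
    _ = L *ᵥ x := rfl

open scoped MatrixOrder in
private lemma psd_mulVec_zero {q : ℕ} {M : Matrix (Fin q) (Fin q) ℂ} (hM : M.PosSemidef)
    {x : Fin q → ℂ} (h : star x ⬝ᵥ (M *ᵥ x) = 0) : M *ᵥ x = 0 := by
  have hs : (CFC.sqrt M)ᴴ = CFC.sqrt M := (CFC.sqrt_nonneg M).isSelfAdjoint.star_eq
  have hsq : CFC.sqrt M * CFC.sqrt M = M := CFC.sqrt_mul_sqrt_self M hM.nonneg
  have h1 : M *ᵥ x = CFC.sqrt M *ᵥ (CFC.sqrt M *ᵥ x) := by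
    rw [Matrix.mulVec_mulVec, hsq]
  have h2 : star (CFC.sqrt M *ᵥ x) ⬝ᵥ (CFC.sqrt M *ᵥ x) = 0 := by
    rw [star_mulVec_dot, hs, Matrix.mulVec_mulVec, hsq, h]
  have h3 : CFC.sqrt M *ᵥ x = 0 := dotProduct_star_self_eq_zero.mp h2
  rw [h1, h3, Matrix.mulVec_zero]

private lemma proj_matrix {q : ℕ} (S C : Submodule ℂ (Fin q → ℂ)) (h : IsCompl S C) :
    ∃ F : Matrix (Fin q) (Fin q) ℂ,
      (∀ x, F *ᵥ x ∈ S) ∧ (∀ x ∈ S, F *ᵥ x = x) ∧ (∀ x ∈ C, F *ᵥ x = 0) := by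
  set f : (Fin q → ℂ) →ₗ[ℂ] (Fin q → ℂ) := S.subtype ∘ₗ (S.linearProjOfIsCompl C h) with hfdef
  have hmv : ∀ x, (LinearMap.toMatrix' f) *ᵥ x = f x := by
    intro x; rw [← Matrix.toLin'_apply, Matrix.toLin'_toMatrix']
  refine ⟨LinearMap.toMatrix' f, fun x => ?_, fun x hx => ?_, fun x hx => ?_⟩
  · rw [hmv]; exact ((S.linearProjOfIsCompl C h) x).2
  · rw [hmv]
    have h1 : (S.linearProjOfIsCompl C h) ((⟨x, hx⟩ : S) : Fin q → ℂ) = ⟨x, hx⟩ :=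
      Submodule.linearProjOfIsCompl_apply_left h ⟨x, hx⟩
    simp only [hfdef, LinearMap.comp_apply, Submodule.subtype_apply]
    rw [h1]
  · rw [hmv]
    have h1 : (S.linearProjOfIsCompl C h) x = 0 :=
      Submodule.linearProjOfIsCompl_apply_right' h hx
    simp only [hfdef, LinearMap.comp_apply, Submodule.subtype_apply]
    rw [h1]; rfl

private lemma triple {a b c d : ℕ} (A : Matrix (Fin a) (Fin b) ℂ) (B : Matrix (Fin b) (Fin c) ℂ)
    (C : Matrix (Fin c) (Fin d) ℂ) (x : Fin d → ℂ) :
    (A * B * C) *ᵥ x = A *ᵥ (B *ᵥ (C *ᵥ x)) := by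
  simp only [Matrix.mulVec_mulVec, Matrix.mul_assoc]

/-- Non-strict projection lemma: there exists `X` with
`Q + Uᴴ X V + Vᴴ Xᴴ U ⪰ 0` iff `Uₚᴴ Q Uₚ ⪰ 0`, `Vₚᴴ Q Vₚ ⪰ 0` and every
`ξ ∈ ker U ∩ ker V` with `ξᴴ Q ξ = 0` lies in `ker Q`. Here the columns of
`Uₚ` (resp. `Vₚ`) form a basis of `ker U` (resp. `ker V`). -/
theorem stmt2 {p m n k l : ℕ}
    (Q : Matrix (Fin p) (Fin p) ℂ) (hQ : Q.IsHermitian)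
    (U : Matrix (Fin m) (Fin p) ℂ) (V : Matrix (Fin n) (Fin p) ℂ)
    (Up : Matrix (Fin p) (Fin k) ℂ) (Vp : Matrix (Fin p) (Fin l) ℂ)
    (hUp1 : U * Up = 0)
    (hUp2 : ∀ x, U *ᵥ x = 0 → ∃ y, Up *ᵥ y = x)
    (hUp3 : Function.Injective (Up.mulVec))
    (hVp1 : V * Vp = 0)
    (hVp2 : ∀ x, V *ᵥ x = 0 → ∃ y, Vp *ᵥ y = x)
    (hVp3 : Function.Injective (Vp.mulVec)) :
    (∃ X : Matrix (Fin m) (Fin n) ℂ,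
        (Q + Uᴴ * X * V + Vᴴ * Xᴴ * U).PosSemidef) ↔
      ((Upᴴ * Q * Up).PosSemidef ∧ (Vpᴴ * Q * Vp).PosSemidef ∧
        ∀ ξ : Fin p → ℂ, U *ᵥ ξ = 0 → V *ᵥ ξ = 0 →
          star ξ ⬝ᵥ (Q *ᵥ ξ) = 0 → Q *ᵥ ξ = 0) := by
  constructor
  · rintro ⟨X, hM⟩
    have hUpU : Upᴴ * Uᴴ = 0 := by
      have h := congrArg Matrix.conjTranspose hUp1
      rwa [Matrix.conjTranspose_mul, Matrix.conjTranspose_zero] at h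
    have hVpV : Vpᴴ * Vᴴ = 0 := by
      have h := congrArg Matrix.conjTranspose hVp1
      rwa [Matrix.conjTranspose_mul, Matrix.conjTranspose_zero] at h
    refine ⟨?_, ?_, ?_⟩
    · have h1 := hM.conjTranspose_mul_mul_same Up
      have e1 : Upᴴ * (Uᴴ * X * V) * Up = 0 := by
        simp only [← Matrix.mul_assoc]; rw [hUpU]; simp
      have e2 : Upᴴ * (Vᴴ * Xᴴ * U) * Up = 0 := by
        simp only [Matrix.mul_assoc]; rw [hUp1]; simp
      have h2 : Upᴴ * (Q + Uᴴ * X * V + Vᴴ * Xᴴ * U) * Up = Upᴴ * Q * Up := by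
        simp only [Matrix.mul_add, Matrix.add_mul, e1, e2, add_zero]
      exact h2 ▸ h1
    · have h1 := hM.conjTranspose_mul_mul_same Vp
      have e1 : Vpᴴ * (Uᴴ * X * V) * Vp = 0 := by
        simp only [Matrix.mul_assoc]; rw [hVp1]; simp
      have e2 : Vpᴴ * (Vᴴ * Xᴴ * U) * Vp = 0 := by
        simp only [← Matrix.mul_assoc]; rw [hVpV]; simp
      have h2 : Vpᴴ * (Q + Uᴴ * X * V + Vᴴ * Xᴴ * U) * Vp = Vpᴴ * Q * Vp := by
        simp only [Matrix.mul_add, Matrix.add_mul, e1, e2, add_zero]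
      exact h2 ▸ h1
    · intro ξ hUξ hVξ hQξ
      have hBv : (Uᴴ * X * V) *ᵥ ξ = 0 := by
        rw [← Matrix.mulVec_mulVec, hVξ, Matrix.mulVec_zero]
      have hCv : (Vᴴ * Xᴴ * U) *ᵥ ξ = 0 := by
        rw [← Matrix.mulVec_mulVec, hUξ, Matrix.mulVec_zero]
      have hMv0 : star ξ ⬝ᵥ ((Q + Uᴴ * X * V + Vᴴ * Xᴴ * U) *ᵥ ξ) = 0 := by
        rw [Matrix.add_mulVec, Matrix.add_mulVec, hBv, hCv, add_zero, add_zero, hQξ]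
      have hz := psd_mulVec_zero hM hMv0
      rw [Matrix.add_mulVec, Matrix.add_mulVec, hBv, hCv, add_zero, add_zero] at hz
      exact hz
  · rintro ⟨hU, hV, hker⟩
    classical
    -- quadratic form of Q is nonnegative on ker U and ker V
    have hQU : ∀ z, U *ᵥ z = 0 → 0 ≤ star z ⬝ᵥ (Q *ᵥ z) := by
      intro z hz
      obtain ⟨y, rfl⟩ := hUp2 z hz
      have h0 := hU.dotProduct_mulVec_nonneg y
      have he : star (Up *ᵥ y) ⬝ᵥ (Q *ᵥ (Up *ᵥ y)) = star y ⬝ᵥ ((Upᴴ * Q * Up) *ᵥ y) := by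
        rw [star_mulVec_dot]
        simp only [Matrix.mulVec_mulVec, Matrix.mul_assoc]
      rw [he]; exact h0
    have hQV : ∀ z, V *ᵥ z = 0 → 0 ≤ star z ⬝ᵥ (Q *ᵥ z) := by
      intro z hz
      obtain ⟨y, rfl⟩ := hVp2 z hz
      have h0 := hV.dotProduct_mulVec_nonneg y
      have he : star (Vp *ᵥ y) ⬝ᵥ (Q *ᵥ (Vp *ᵥ y)) = star y ⬝ᵥ ((Vpᴴ * Q * Vp) *ᵥ y) := by
        rw [star_mulVec_dot]
        simp only [Matrix.mulVec_mulVec, Matrix.mul_assoc]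
      rw [he]; exact h0
    -- the subspaces
    set 𝒰 : Submodule ℂ (Fin p → ℂ) := LinearMap.ker U.mulVecLin with hUdef
    set 𝒱 : Submodule ℂ (Fin p → ℂ) := LinearMap.ker V.mulVecLin with hVdef
    have hmemU : ∀ x, x ∈ 𝒰 ↔ U *ᵥ x = 0 := fun x => by
      simp [hUdef, LinearMap.mem_ker, Matrix.mulVecLin_apply]
    have hmemV : ∀ x, x ∈ 𝒱 ↔ V *ᵥ x = 0 := fun x => by
      simp [hVdef, LinearMap.mem_ker, Matrix.mulVecLin_apply]
    set NN : Submodule ℂ (Fin p → ℂ) := 𝒰 ⊓ 𝒱 with hNdef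
    have hmemN : ∀ x, x ∈ NN ↔ (U *ᵥ x = 0 ∧ V *ᵥ x = 0) := fun x => by
      rw [hNdef, Submodule.mem_inf, hmemU, hmemV]
    obtain ⟨M1, hM1⟩ := Submodule.exists_isCompl NN
    set S2 : Submodule ℂ (Fin p → ℂ) := 𝒰 ⊓ M1 with hS2def
    set S3 : Submodule ℂ (Fin p → ℂ) := 𝒱 ⊓ M1 with hS3def
    obtain ⟨S4, hS4⟩ := Submodule.exists_isCompl (𝒰 ⊔ 𝒱)
    have hNU : NN ≤ 𝒰 := inf_le_left
    have hNV : NN ≤ 𝒱 := inf_le_right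
    have hS2U : S2 ≤ 𝒰 := inf_le_left
    have hS2M : S2 ≤ M1 := inf_le_right
    have hS3V : S3 ≤ 𝒱 := inf_le_left
    have hS3M : S3 ≤ M1 := inf_le_right
    have hNM1z : ∀ x, x ∈ NN → x ∈ M1 → x = 0 := fun x h1 h2 =>
      (Submodule.disjoint_def.1 hM1.disjoint) x h1 h2
    have hS4z : ∀ x, x ∈ 𝒰 ⊔ 𝒱 → x ∈ S4 → x = 0 := fun x h1 h2 =>
      (Submodule.disjoint_def.1 hS4.disjoint) x h1 h2
    have hUsplit : ∀ x ∈ 𝒰, ∃ a ∈ NN, ∃ b ∈ S2, x = a + b := by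
      intro x hx
      obtain ⟨u, v, huv, -⟩ := Submodule.existsUnique_add_of_isCompl hM1 x
      refine ⟨u, u.2, v, Submodule.mem_inf.2 ⟨?_, v.2⟩, huv.symm⟩
      have hv : (v : Fin p → ℂ) = x - u := by rw [← huv]; abel
      rw [hv]; exact Submodule.sub_mem 𝒰 hx (hNU u.2)
    have hVsplit : ∀ x ∈ 𝒱, ∃ a ∈ NN, ∃ b ∈ S3, x = a + b := by
      intro x hx
      obtain ⟨u, v, huv, -⟩ := Submodule.existsUnique_add_of_isCompl hM1 x
      refine ⟨u, u.2, v, Submodule.mem_inf.2 ⟨?_, v.2⟩, huv.symm⟩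
      have hv : (v : Fin p → ℂ) = x - u := by rw [← huv]; abel
      rw [hv]; exact Submodule.sub_mem 𝒱 hx (hNV u.2)
    have hdecomp : ∀ x : Fin p → ℂ, ∃ a ∈ NN, ∃ b ∈ S2, ∃ c ∈ S3, ∃ d ∈ S4,
        x = a + b + c + d := by
      intro x
      obtain ⟨w, s4, hws, -⟩ := Submodule.existsUnique_add_of_isCompl hS4 x
      obtain ⟨y, hy, z, hz, hyz⟩ := Submodule.mem_sup.1 w.2
      obtain ⟨a1, ha1, b, hb, hyab⟩ := hUsplit y hy
      obtain ⟨a2, ha2, c, hc, hzac⟩ := hVsplit z hz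
      refine ⟨a1 + a2, NN.add_mem ha1 ha2, b, hb, c, hc, s4, s4.2, ?_⟩
      have hw : (w : Fin p → ℂ) = y + z := hyz.symm
      rw [← hws, hw, hyab, hzac]; abel
    -- the four complement facts
    have hc1 : IsCompl NN (S2 ⊔ S3 ⊔ S4) := by
      constructor
      · refine Submodule.disjoint_def.2 ?_
        intro x hxN hxC
        obtain ⟨yy, hyy, z, hz4, hyzx⟩ := Submodule.mem_sup.1 hxC
        obtain ⟨s2, hs2, s3, hs3, hs23⟩ := Submodule.mem_sup.1 hyy
        have hzeq : z = x - s2 - s3 := by rw [← hyzx, ← hs23]; abel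
        have hzUV : z ∈ 𝒰 ⊔ 𝒱 := by
          rw [hzeq]
          exact Submodule.sub_mem _ (Submodule.sub_mem _ (Submodule.mem_sup_left (hNU hxN))
            (Submodule.mem_sup_left (hS2U hs2))) (Submodule.mem_sup_right (hS3V hs3))
        have hz0 : z = 0 := hS4z z hzUV hz4
        have hx23 : x = s2 + s3 := by rw [← hyzx, ← hs23, hz0, add_zero]
        have hs2V : s2 ∈ 𝒱 := by
          have h' : s2 = x - s3 := by rw [hx23]; abel
          rw [h']; exact Submodule.sub_mem _ (hNV hxN) (hS3V hs3)
        have hs20 : s2 = 0 := hNM1z s2 (Submodule.mem_inf.2 ⟨hS2U hs2, hs2V⟩) (hS2M hs2)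
        have hx3 : x = s3 := by rw [hx23, hs20, zero_add]
        exact hNM1z x hxN (hx3 ▸ hS3M hs3)
      · refine codisjoint_iff.2 (eq_top_iff.2 ?_)
        intro x _hx
        obtain ⟨a, ha, b, hb, c, hc, d, hd, hx⟩ := hdecomp x
        refine Submodule.mem_sup.2 ⟨a, ha, b + c + d,
          Submodule.mem_sup.2 ⟨b + c, Submodule.mem_sup.2 ⟨b, hb, c, hc, rfl⟩, d, hd, rfl⟩, ?_⟩
        rw [hx]; abel
    have hc2 : IsCompl S2 (NN ⊔ S3 ⊔ S4) := by
      constructor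
      · refine Submodule.disjoint_def.2 ?_
        intro x hxS hxC
        obtain ⟨yy, hyy, z, hz4, hyzx⟩ := Submodule.mem_sup.1 hxC
        obtain ⟨a, haN, s3, hs3, has⟩ := Submodule.mem_sup.1 hyy
        have hzeq : z = x - a - s3 := by rw [← hyzx, ← has]; abel
        have hzUV : z ∈ 𝒰 ⊔ 𝒱 := by
          rw [hzeq]
          exact Submodule.sub_mem _ (Submodule.sub_mem _ (Submodule.mem_sup_left (hS2U hxS))
            (Submodule.mem_sup_left (hNU haN))) (Submodule.mem_sup_right (hS3V hs3))
        have hz0 : z = 0 := hS4z z hzUV hz4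
        have hxas : x = a + s3 := by rw [← hyzx, ← has, hz0, add_zero]
        have hs3U : s3 ∈ 𝒰 := by
          have h' : s3 = x - a := by rw [hxas]; abel
          rw [h']; exact Submodule.sub_mem _ (hS2U hxS) (hNU haN)
        have hs30 : s3 = 0 := hNM1z s3 (Submodule.mem_inf.2 ⟨hs3U, hS3V hs3⟩) (hS3M hs3)
        have hxa : x = a := by rw [hxas, hs30, add_zero]
        exact hNM1z x (hxa ▸ haN) (hS2M hxS)
      · refine codisjoint_iff.2 (eq_top_iff.2 ?_)
        intro x _hx
        obtain ⟨a, ha, b, hb, c, hc, d, hd, hx⟩ := hdecomp x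
        refine Submodule.mem_sup.2 ⟨b, hb, a + c + d,
          Submodule.mem_sup.2 ⟨a + c, Submodule.mem_sup.2 ⟨a, ha, c, hc, rfl⟩, d, hd, rfl⟩, ?_⟩
        rw [hx]; abel
    have hc3 : IsCompl S3 (NN ⊔ S2 ⊔ S4) := by
      constructor
      · refine Submodule.disjoint_def.2 ?_
        intro x hxS hxC
        obtain ⟨yy, hyy, z, hz4, hyzx⟩ := Submodule.mem_sup.1 hxC
        obtain ⟨a, haN, s2, hs2, has⟩ := Submodule.mem_sup.1 hyy
        have hzeq : z = x - a - s2 := by rw [← hyzx, ← has]; abel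
        have hzUV : z ∈ 𝒰 ⊔ 𝒱 := by
          rw [hzeq]
          exact Submodule.sub_mem _ (Submodule.sub_mem _ (Submodule.mem_sup_right (hS3V hxS))
            (Submodule.mem_sup_left (hNU haN))) (Submodule.mem_sup_left (hS2U hs2))
        have hz0 : z = 0 := hS4z z hzUV hz4
        have hxas : x = a + s2 := by rw [← hyzx, ← has, hz0, add_zero]
        have hs2V : s2 ∈ 𝒱 := by
          have h' : s2 = x - a := by rw [hxas]; abel
          rw [h']; exact Submodule.sub_mem _ (hS3V hxS) (hNV haN)
        have hs20 : s2 = 0 := hNM1z s2 (Submodule.mem_inf.2 ⟨hS2U hs2, hs2V⟩) (hS2M hs2)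
        have hxa : x = a := by rw [hxas, hs20, add_zero]
        exact hNM1z x (hxa ▸ haN) (hS3M hxS)
      · refine codisjoint_iff.2 (eq_top_iff.2 ?_)
        intro x _hx
        obtain ⟨a, ha, b, hb, c, hc, d, hd, hx⟩ := hdecomp x
        refine Submodule.mem_sup.2 ⟨c, hc, a + b + d,
          Submodule.mem_sup.2 ⟨a + b, Submodule.mem_sup.2 ⟨a, ha, b, hb, rfl⟩, d, hd, rfl⟩, ?_⟩
        rw [hx]; abel
    -- the four projections
    obtain ⟨F1, hF1mem, hF1id, hF1z⟩ := proj_matrix NN (S2 ⊔ S3 ⊔ S4) hc1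
    obtain ⟨F2, hF2mem, hF2id, hF2z⟩ := proj_matrix S2 (NN ⊔ S3 ⊔ S4) hc2
    obtain ⟨F3, hF3mem, hF3id, hF3z⟩ := proj_matrix S3 (NN ⊔ S2 ⊔ S4) hc3
    obtain ⟨F4, hF4mem, hF4id, hF4z⟩ := proj_matrix S4 (𝒰 ⊔ 𝒱) hS4.symm
    have hF2Vz : ∀ x, V *ᵥ x = 0 → F2 *ᵥ x = 0 := by
      intro x hx
      obtain ⟨a, ha, c, hc, hxac⟩ := hVsplit x ((hmemV x).2 hx)
      refine hF2z x ?_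
      rw [hxac]
      exact Submodule.add_mem _ (Submodule.mem_sup_left (Submodule.mem_sup_left ha))
        (Submodule.mem_sup_left (Submodule.mem_sup_right hc))
    have hF3Uz : ∀ x, U *ᵥ x = 0 → F3 *ᵥ x = 0 := by
      intro x hx
      obtain ⟨a, ha, b, hb, hxab⟩ := hUsplit x ((hmemU x).2 hx)
      refine hF3z x ?_
      rw [hxab]
      exact Submodule.add_mem _ (Submodule.mem_sup_left (Submodule.mem_sup_left ha))
        (Submodule.mem_sup_left (Submodule.mem_sup_right hb))
    have hF4Uz : ∀ x, U *ᵥ x = 0 → F4 *ᵥ x = 0 := fun x hx =>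
      hF4z x (Submodule.mem_sup_left ((hmemU x).2 hx))
    have hF4Vz : ∀ x, V *ᵥ x = 0 → F4 *ᵥ x = 0 := fun x hx =>
      hF4z x (Submodule.mem_sup_right ((hmemV x).2 hx))
    -- the sum of the projections is the identity
    have hsum : F1 + F2 + F3 + F4 = (1 : Matrix (Fin p) (Fin p) ℂ) := by
      apply mulVec_ext'
      intro x
      obtain ⟨a, ha, b, hb, c, hc, d, hd, hx⟩ := hdecomp x
      have e1 : F1 *ᵥ x = a := by
        rw [hx, Matrix.mulVec_add, Matrix.mulVec_add, Matrix.mulVec_add,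
          hF1id a ha,
          hF1z b (Submodule.mem_sup_left (Submodule.mem_sup_left hb)),
          hF1z c (Submodule.mem_sup_left (Submodule.mem_sup_right hc)),
          hF1z d (Submodule.mem_sup_right hd)]
        abel
      have e2 : F2 *ᵥ x = b := by
        rw [hx, Matrix.mulVec_add, Matrix.mulVec_add, Matrix.mulVec_add,
          hF2id b hb,
          hF2z a (Submodule.mem_sup_left (Submodule.mem_sup_left ha)),
          hF2z c (Submodule.mem_sup_left (Submodule.mem_sup_right hc)),
          hF2z d (Submodule.mem_sup_right hd)]
        abel
      have e3 : F3 *ᵥ x = c := by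
        rw [hx, Matrix.mulVec_add, Matrix.mulVec_add, Matrix.mulVec_add,
          hF3id c hc,
          hF3z a (Submodule.mem_sup_left (Submodule.mem_sup_left ha)),
          hF3z b (Submodule.mem_sup_left (Submodule.mem_sup_right hb)),
          hF3z d (Submodule.mem_sup_right hd)]
        abel
      have e4 : F4 *ᵥ x = d := by
        rw [hx, Matrix.mulVec_add, Matrix.mulVec_add, Matrix.mulVec_add,
          hF4id d hd,
          hF4z a (Submodule.mem_sup_left (hNU ha)),
          hF4z b (Submodule.mem_sup_left (hS2U hb)),
          hF4z c (Submodule.mem_sup_right (hS3V hc))]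
        abel
      rw [Matrix.add_mulVec, Matrix.add_mulVec, Matrix.add_mulVec, e1, e2, e3, e4,
        Matrix.one_mulVec, hx]
    have hF1idem : F1 * F1 = F1 := by
      apply mulVec_ext'; intro x
      rw [← Matrix.mulVec_mulVec]; exact hF1id _ (hF1mem x)
    -- construction of the projection E onto N adapted to Q
    have hkerS0 : ∀ x, (F1ᴴ * Q * F1) *ᵥ x = 0 → ((1 - F1)ᴴ * Q * F1) *ᵥ x = 0 := by
      intro x hx
      have hd0 : star x ⬝ᵥ ((F1ᴴ * Q * F1) *ᵥ x) = 0 := by rw [hx, dotProduct_zero]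
      rw [triple, ← star_mulVec_dot] at hd0
      have hNx := (hmemN (F1 *ᵥ x)).1 (hF1mem x)
      have hQz : Q *ᵥ (F1 *ᵥ x) = 0 := hker (F1 *ᵥ x) hNx.1 hNx.2 hd0
      rw [triple, hQz, Matrix.mulVec_zero]
    obtain ⟨Cw, hCw⟩ := factor_left (F1ᴴ * Q * F1) ((1 - F1)ᴴ * Q * F1) hkerS0
    set E := F1 + F1 * Cwᴴ * (1 - F1) with hEdef
    have h1mF1 : (1 - F1) * (1 - F1) = 1 - F1 := by
      simp only [Matrix.mul_sub, Matrix.sub_mul, Matrix.one_mul, Matrix.mul_one, hF1idem]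
      abel
    have hE3mat : Eᴴ * (Q * F1) = Q * F1 := by
      have hEH : Eᴴ = F1ᴴ + (1 - F1)ᴴ * (Cw * F1ᴴ) := by
        rw [hEdef]
        simp only [Matrix.conjTranspose_add, Matrix.conjTranspose_mul,
          Matrix.conjTranspose_conjTranspose, Matrix.mul_assoc]
      rw [hEH, Matrix.add_mul]
      have h2 : Cw * F1ᴴ * (Q * F1) = (1 - F1)ᴴ * (Q * F1) := by
        calc Cw * F1ᴴ * (Q * F1) = Cw * (F1ᴴ * Q * F1) := by
              simp only [Matrix.mul_assoc]
          _ = (1 - F1)ᴴ * Q * F1 := hCw.symm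
          _ = (1 - F1)ᴴ * (Q * F1) := by rw [Matrix.mul_assoc]
      have hterm : (1 - F1)ᴴ * (Cw * F1ᴴ) * (Q * F1) = (1 - F1)ᴴ * (Q * F1) := by
        calc (1 - F1)ᴴ * (Cw * F1ᴴ) * (Q * F1)
            = (1 - F1)ᴴ * (Cw * F1ᴴ * (Q * F1)) := by simp only [Matrix.mul_assoc]
          _ = (1 - F1)ᴴ * ((1 - F1)ᴴ * (Q * F1)) := by rw [h2]
          _ = ((1 - F1) * (1 - F1))ᴴ * (Q * F1) := by
              rw [← Matrix.mul_assoc, ← Matrix.conjTranspose_mul]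
          _ = (1 - F1)ᴴ * (Q * F1) := by rw [h1mF1]
      rw [hterm]
      have hid : F1ᴴ + (1 - F1)ᴴ = 1 := by
        rw [Matrix.conjTranspose_sub, Matrix.conjTranspose_one]; abel
      calc F1ᴴ * (Q * F1) + (1 - F1)ᴴ * (Q * F1) = (F1ᴴ + (1 - F1)ᴴ) * (Q * F1) := by
            rw [Matrix.add_mul]
        _ = 1 * (Q * F1) := by rw [hid]
        _ = Q * F1 := Matrix.one_mul _
    have hEmemN : ∀ x, E *ᵥ x ∈ NN := by
      intro x
      rw [hEdef, Matrix.add_mulVec]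
      refine NN.add_mem (hF1mem x) ?_
      have h' : (F1 * Cwᴴ * (1 - F1)) *ᵥ x = F1 *ᵥ ((Cwᴴ * (1 - F1)) *ᵥ x) := by
        simp only [Matrix.mulVec_mulVec, Matrix.mul_assoc]
      rw [h']; exact hF1mem _
    have hEU : ∀ x, U *ᵥ (E *ᵥ x) = 0 := fun x => ((hmemN _).1 (hEmemN x)).1
    have hEV : ∀ x, V *ᵥ (E *ᵥ x) = 0 := fun x => ((hmemN _).1 (hEmemN x)).2
    have hEid : ∀ x ∈ NN, E *ᵥ x = x := by
      intro x hx
      rw [hEdef, Matrix.add_mulVec]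
      have h1 : F1 *ᵥ x = x := hF1id x hx
      have h0 : (1 - F1) *ᵥ x = 0 := by
        rw [Matrix.sub_mulVec, Matrix.one_mulVec, h1, sub_self]
      have h2 : (F1 * Cwᴴ * (1 - F1)) *ᵥ x = 0 := by
        calc (F1 * Cwᴴ * (1 - F1)) *ᵥ x = (F1 * Cwᴴ) *ᵥ ((1 - F1) *ᵥ x) := by
              rw [Matrix.mulVec_mulVec]
          _ = 0 := by rw [h0, Matrix.mulVec_zero]
      rw [h1, h2, add_zero]
    have hE3 : ∀ x ∈ NN, Eᴴ *ᵥ (Q *ᵥ x) = Q *ᵥ x := by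
      intro x hx
      have h1 : F1 *ᵥ x = x := hF1id x hx
      calc Eᴴ *ᵥ (Q *ᵥ x) = Eᴴ *ᵥ (Q *ᵥ (F1 *ᵥ x)) := by rw [h1]
        _ = (Eᴴ * (Q * F1)) *ᵥ x := by simp only [Matrix.mulVec_mulVec]
        _ = (Q * F1) *ᵥ x := by rw [hE3mat]
        _ = Q *ᵥ (F1 *ᵥ x) := by rw [← Matrix.mulVec_mulVec]
        _ = Q *ᵥ x := by rw [h1]
    -- the Schur-type remainder G
    set G := Q - Eᴴ * Q * E with hGdef
    have hGH : Gᴴ = G := by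
      rw [hGdef]
      simp only [Matrix.conjTranspose_sub, Matrix.conjTranspose_mul,
        Matrix.conjTranspose_conjTranspose, hQ.eq, Matrix.mul_assoc]
    have hGvec : ∀ x, G *ᵥ x = Q *ᵥ x - Q *ᵥ (E *ᵥ x) := by
      intro x
      rw [hGdef, Matrix.sub_mulVec]
      congr 1
      calc (Eᴴ * Q * E) *ᵥ x = Eᴴ *ᵥ (Q *ᵥ (E *ᵥ x)) := triple Eᴴ Q E x
        _ = Q *ᵥ (E *ᵥ x) := hE3 _ (hEmemN x)
    have hGN : ∀ x ∈ NN, G *ᵥ x = 0 := by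
      intro x hx; rw [hGvec, hEid x hx, sub_self]
    have hGF1 : G * F1 = 0 := by
      apply mulVec_ext'; intro x
      rw [← Matrix.mulVec_mulVec, hGN _ (hF1mem x), Matrix.zero_mulVec]
    have hF1G : F1ᴴ * G = 0 := by
      have h' := congrArg Matrix.conjTranspose hGF1
      rwa [Matrix.conjTranspose_mul, hGH, Matrix.conjTranspose_zero] at h'
    have hGform : ∀ z, star z ⬝ᵥ (G *ᵥ z)
        = star (z - E *ᵥ z) ⬝ᵥ (Q *ᵥ (z - E *ᵥ z)) := by
      intro z
      have hw := hEmemN z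
      have hβ : star (E *ᵥ z) ⬝ᵥ (Q *ᵥ (E *ᵥ z)) = star z ⬝ᵥ (Q *ᵥ (E *ᵥ z)) := by
        rw [star_mulVec_dot, hE3 _ hw]
      have hγ : star (E *ᵥ z) ⬝ᵥ (Q *ᵥ z) = star (star z ⬝ᵥ (Q *ᵥ (E *ᵥ z))) := by
        rw [herm_dot_conj hQ.eq]
      have hLHS : star z ⬝ᵥ (G *ᵥ z)
          = star z ⬝ᵥ (Q *ᵥ z) - star z ⬝ᵥ (Q *ᵥ (E *ᵥ z)) := by
        rw [hGvec, dotProduct_sub]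
      have hreal : star (star z ⬝ᵥ (G *ᵥ z)) = star z ⬝ᵥ (G *ᵥ z) := herm_dot_conj hGH z z
      have hrealQ : star (star z ⬝ᵥ (Q *ᵥ z)) = star z ⬝ᵥ (Q *ᵥ z) := herm_dot_conj hQ.eq z z
      have hRHS : star (z - E *ᵥ z) ⬝ᵥ (Q *ᵥ (z - E *ᵥ z))
          = star z ⬝ᵥ (Q *ᵥ z) - star (star z ⬝ᵥ (Q *ᵥ (E *ᵥ z))) := by
        rw [Matrix.mulVec_sub, star_sub, sub_dotProduct, dotProduct_sub, dotProduct_sub,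
          hβ, hγ]
        ring
      rw [hRHS]
      calc star z ⬝ᵥ (G *ᵥ z) = star (star z ⬝ᵥ (G *ᵥ z)) := hreal.symm
        _ = star (star z ⬝ᵥ (Q *ᵥ z) - star z ⬝ᵥ (Q *ᵥ (E *ᵥ z))) := by rw [hLHS]
        _ = star z ⬝ᵥ (Q *ᵥ z) - star (star z ⬝ᵥ (Q *ᵥ (E *ᵥ z))) := by
            rw [star_sub, hrealQ]
    have hGU : ∀ z, U *ᵥ z = 0 → 0 ≤ star z ⬝ᵥ (G *ᵥ z) := by
      intro z hz
      rw [hGform]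
      apply hQU
      rw [Matrix.mulVec_sub, hz, hEU z, sub_self]
    have hGV : ∀ z, V *ᵥ z = 0 → 0 ≤ star z ⬝ᵥ (G *ᵥ z) := by
      intro z hz
      rw [hGform]
      apply hQV
      rw [Matrix.mulVec_sub, hz, hEV z, sub_self]
    -- decomposition of G
    have hF1Gz : ∀ (B : Matrix (Fin p) (Fin p) ℂ), F1ᴴ * (G * B) = 0 := by
      intro B; rw [← Matrix.mul_assoc, hF1G, Matrix.zero_mul]
    have hGsum : G = F2ᴴ * (G * F2) + F2ᴴ * (G * F3) + F2ᴴ * (G * F4)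
        + F3ᴴ * (G * F2) + F3ᴴ * (G * F3) + F3ᴴ * (G * F4)
        + F4ᴴ * (G * F2) + F4ᴴ * (G * F3) + F4ᴴ * (G * F4) := by
      have h0 : G = (F1 + F2 + F3 + F4)ᴴ * (G * (F1 + F2 + F3 + F4)) := by
        rw [hsum]; simp
      conv_lhs => rw [h0]
      simp only [Matrix.conjTranspose_add, Matrix.mul_add, Matrix.add_mul,
        hGF1, hF1Gz, Matrix.mul_zero, Matrix.zero_mul, add_zero, zero_add]
      abel
    have hQG : Q = Eᴴ * Q * E + G := by rw [hGdef]; abel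
    set A := -(F3ᴴ * (G * F2) + F3ᴴ * (G * F4) + F4ᴴ * (G * F2)
      + (2⁻¹ : ℂ) • (F4ᴴ * (G * F4))) with hAdef
    have hAH : Aᴴ = -(F2ᴴ * (G * F3) + F4ᴴ * (G * F3) + F2ᴴ * (G * F4)
        + (2⁻¹ : ℂ) • (F4ᴴ * (G * F4))) := by
      rw [hAdef]
      simp only [Matrix.conjTranspose_neg, Matrix.conjTranspose_add, Matrix.conjTranspose_smul,
        Matrix.conjTranspose_mul, Matrix.conjTranspose_conjTranspose, hGH, Matrix.mul_assoc,
        star_inv₀, star_ofNat]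
    have key : ∀ (g g22 g23 g24 g32 g33 g34 g42 g43 g44 e : Matrix (Fin p) (Fin p) ℂ),
        g = g22 + g23 + g24 + g32 + g33 + g34 + g42 + g43 + g44 →
        e + g + -(g32 + g34 + g42 + (2⁻¹ : ℂ) • g44)
          + -(g23 + g43 + g24 + (2⁻¹ : ℂ) • g44) = e + g22 + g33 := by
      intro g g22 g23 g24 g32 g33 g34 g42 g43 g44 e hg
      subst hg
      module
    have hQA : Q + A + Aᴴ = Eᴴ * Q * E + F2ᴴ * (G * F2) + F3ᴴ * (G * F3) := by
      conv_lhs => rw [hQG]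
      rw [hAH, hAdef]
      exact key G (F2ᴴ * (G * F2)) (F2ᴴ * (G * F3)) (F2ᴴ * (G * F4)) (F3ᴴ * (G * F2))
        (F3ᴴ * (G * F3)) (F3ᴴ * (G * F4)) (F4ᴴ * (G * F2)) (F4ᴴ * (G * F3))
        (F4ᴴ * (G * F4)) (Eᴴ * Q * E) hGsum
    -- positive semidefiniteness of the certificate
    have t1 : (Eᴴ * Q * E).PosSemidef := by
      refine Matrix.PosSemidef.of_dotProduct_mulVec_nonneg ?_ ?_
      · show (Eᴴ * Q * E)ᴴ = Eᴴ * Q * E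
        simp only [Matrix.conjTranspose_mul, Matrix.conjTranspose_conjTranspose, hQ.eq,
          Matrix.mul_assoc]
      · intro x
        have h' : star x ⬝ᵥ ((Eᴴ * Q * E) *ᵥ x) = star (E *ᵥ x) ⬝ᵥ (Q *ᵥ (E *ᵥ x)) := by
          rw [triple, ← star_mulVec_dot]
        rw [h']; exact hQU _ (hEU x)
    have t2 : (F2ᴴ * (G * F2)).PosSemidef := by
      refine Matrix.PosSemidef.of_dotProduct_mulVec_nonneg ?_ ?_
      · show (F2ᴴ * (G * F2))ᴴ = F2ᴴ * (G * F2)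
        simp only [Matrix.conjTranspose_mul, Matrix.conjTranspose_conjTranspose, hGH,
          Matrix.mul_assoc]
      · intro x
        have h' : star x ⬝ᵥ ((F2ᴴ * (G * F2)) *ᵥ x) = star (F2 *ᵥ x) ⬝ᵥ (G *ᵥ (F2 *ᵥ x)) := by
          simp only [← Matrix.mulVec_mulVec]
          rw [← star_mulVec_dot]
        rw [h']
        exact hGU _ ((hmemU _).1 (hS2U (hF2mem x)))
    have t3 : (F3ᴴ * (G * F3)).PosSemidef := by
      refine Matrix.PosSemidef.of_dotProduct_mulVec_nonneg ?_ ?_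
      · show (F3ᴴ * (G * F3))ᴴ = F3ᴴ * (G * F3)
        simp only [Matrix.conjTranspose_mul, Matrix.conjTranspose_conjTranspose, hGH,
          Matrix.mul_assoc]
      · intro x
        have h' : star x ⬝ᵥ ((F3ᴴ * (G * F3)) *ᵥ x) = star (F3 *ᵥ x) ⬝ᵥ (G *ᵥ (F3 *ᵥ x)) := by
          simp only [← Matrix.mulVec_mulVec]
          rw [← star_mulVec_dot]
        rw [h']
        exact hGV _ ((hmemV _).1 (hS3V (hF3mem x)))
    have hPSD : (Eᴴ * Q * E + F2ᴴ * (G * F2) + F3ᴴ * (G * F3)).PosSemidef :=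
      (t1.add t2).add t3
    -- build X realizing A = Uᴴ X V
    obtain ⟨C3, hC3⟩ := factor_left U F3 hF3Uz
    obtain ⟨C4, hC4⟩ := factor_left U F4 hF4Uz
    set Bm := -(C3ᴴ * (G * F2) + C3ᴴ * (G * F4) + C4ᴴ * (G * F2)
      + (2⁻¹ : ℂ) • (C4ᴴ * (G * F4))) with hBmdef
    have e3 : Uᴴ * C3ᴴ = F3ᴴ := by rw [← Matrix.conjTranspose_mul, ← hC3]
    have e4 : Uᴴ * C4ᴴ = F4ᴴ := by rw [← Matrix.conjTranspose_mul, ← hC4]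
    have hUB : Uᴴ * Bm = A := by
      rw [hBmdef, hAdef]
      simp only [Matrix.mul_neg, Matrix.mul_add, Matrix.mul_smul, ← Matrix.mul_assoc, e3, e4]
    set Pv := F1 + F3 with hPvdef
    have hPvV : ∀ x, V *ᵥ (Pv *ᵥ x) = 0 := by
      intro x
      rw [hPvdef, Matrix.add_mulVec, Matrix.mulVec_add,
        (hmemV _).1 (hNV (hF1mem x)), (hmemV _).1 (hS3V (hF3mem x)), add_zero]
    have hPvid : ∀ x, V *ᵥ x = 0 → Pv *ᵥ x = x := by
      intro x hx
      obtain ⟨a, ha, c, hc, hxac⟩ := hVsplit x ((hmemV x).2 hx)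
      rw [hPvdef, Matrix.add_mulVec, hxac, Matrix.mulVec_add, Matrix.mulVec_add,
        hF1id a ha,
        hF1z c (Submodule.mem_sup_left (Submodule.mem_sup_right hc)),
        hF3z a (Submodule.mem_sup_left (Submodule.mem_sup_left ha)),
        hF3id c hc]
      abel
    have hAkills : ∀ x, V *ᵥ x = 0 → A *ᵥ x = 0 := by
      intro x hx
      have h2 : F2 *ᵥ x = 0 := hF2Vz x hx
      have h4 : F4 *ᵥ x = 0 := hF4Vz x hx
      rw [hAdef, Matrix.neg_mulVec]
      simp only [Matrix.add_mulVec, Matrix.smul_mulVec]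
      simp only [← Matrix.mulVec_mulVec, h2, h4, Matrix.mulVec_zero, smul_zero, add_zero,
        neg_zero]
    have hAPv : A * Pv = 0 := by
      apply mulVec_ext'; intro x
      rw [← Matrix.mulVec_mulVec, hAkills _ (hPvV x), Matrix.zero_mulVec]
    set Dm := Bm * (1 - Pv) with hDmdef
    have hDker : ∀ x, V *ᵥ x = 0 → Dm *ᵥ x = 0 := by
      intro x hx
      rw [hDmdef, ← Matrix.mulVec_mulVec]
      have h0 : (1 - Pv) *ᵥ x = 0 := by
        rw [Matrix.sub_mulVec, Matrix.one_mulVec, hPvid x hx, sub_self]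
      rw [h0, Matrix.mulVec_zero]
    obtain ⟨X, hX⟩ := factor_left V Dm hDker
    refine ⟨X, ?_⟩
    have hUXV : Uᴴ * X * V = A := by
      calc Uᴴ * X * V = Uᴴ * (X * V) := by rw [Matrix.mul_assoc]
        _ = Uᴴ * Dm := by rw [← hX]
        _ = (Uᴴ * Bm) * (1 - Pv) := by rw [hDmdef, Matrix.mul_assoc]
        _ = A * (1 - Pv) := by rw [hUB]
        _ = A - A * Pv := by rw [Matrix.mul_sub, Matrix.mul_one]
        _ = A := by rw [hAPv, sub_zero]
    have hVXU : Vᴴ * Xᴴ * U = Aᴴ := by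
      have h' := congrArg Matrix.conjTranspose hUXV
      rw [Matrix.conjTranspose_mul, Matrix.conjTranspose_mul,
        Matrix.conjTranspose_conjTranspose, ← Matrix.mul_assoc] at h'
      exact h'
    rw [hUXV, hVXU, hQA]
    exact hPSD
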